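/- Factorization of the linearized Hamiltonian flow into parallel transport and a dynamical factor (Theorem 6.1(iii), formulas (6.8)–(6.10)): Let ω be a symplectic form on ℝ^{2n} with Poisson tensor Ψ = ω^{-1} and let Γ be a symplectic connection for ω. Let H : ℝ^{2n} → ℝ be smooth, fix y ∈ ℝ^{2n}, and assume the Hamiltonian flow X^t (solving dX^i/dt = Σ_m ∂_{z^m}H(X)Ψ^{mi}(X), X^0(x) = x) exists for t ∈ [0,T] near y. Let U(t) = (∂X^t(x)^i/∂x^k)|_{x=y} be the Jacobian of the flow at y (equivalently, the solution of the variational system dU^i_k/dt = Σ_l ∂_{z^l}(Σ_m ∂_{z^m}H · Ψ^{mi})(X^t(y)) U^l_k, U(0) = I). Let V(t) be the Γ-parallel transport along the trajectory (dV^i_k/dt = −Σ_{j,m}(dX^t(y)^j/dt)Γ^i_{mj}(X^t(y))V^m_k, V(0) = I), and let W(t) solve dW/dt = M(t)W, W(0) = I, with M(t) = −Ψ(y) · V(t)^T · ∇²H(X^t(y)) · V(t), where ∇²H is the covariant Hessian matrix ∇²_{jk}H = ∂_{z^j}∂_{z^k}H − Σ_m Γ^m_{jk}∂_{z^m}H.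 Then U(t) = V(t)·W(t) for all t ∈ [0,T]. -/

import Mathlib

open scoped BigOperators
noncomputable section

/-- Points of coordinate space `ℝ^N`. -/
abbrev Pt (N : ℕ) := Fin N → ℝ

/-- Partial derivative `∂f/∂x^i` of a scalar function on `ℝ^N`. -/
noncomputable def pd {N : ℕ} (i : Fin N) (f : Pt N → ℝ) (x : Pt N) : ℝ :=
  fderiv ℝ f x (Pi.single i 1)

/-- The Poisson tensor `Ψ = ω⁻¹`. -/
noncomputable def Psi {N : ℕ} (ω : Pt N → Matrix (Fin N) (Fin N) ℝ) (z : Pt N) :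
    Matrix (Fin N) (Fin N) ℝ := (ω z)⁻¹

/-- The Poisson bracket `{f,g}(z) = Σ ∂_m f Ψ^{mi} ∂_i g`. -/
noncomputable def pb {N : ℕ} (ω : Pt N → Matrix (Fin N) (Fin N) ℝ) (f g : Pt N → ℝ)
    (z : Pt N) : ℝ := ∑ m, ∑ i, pd m f z * Psi ω z m i * pd i g z

/-- A symplectic form on `ℝ^N` in coordinates: a smooth, pointwise antisymmetric and
invertible matrix-valued map satisfying the closedness condition. -/
structure SymplForm (N : ℕ) where
  ω : Pt N → Matrix (Fin N) (Fin N) ℝ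
  smooth : ∀ i j, ContDiff ℝ (⊤ : ℕ∞) fun z => ω z i j
  antisymm : ∀ z i j, ω z i j = - ω z j i
  invertible : ∀ z, IsUnit (ω z).det
  closed : ∀ z i j k,
    pd i (fun w => ω w j k) z + pd j (fun w => ω w k i) z + pd k (fun w => ω w i j) z = 0

/-- A symplectic connection for `S`: smooth Christoffel symbols `Γ x j k l = Γ^j_{kl}(x)`,
symmetric in the lower indices, with `ω` covariantly constant. -/
structure SymplConn (N : ℕ) (S : SymplForm N) where
  Γ : Pt N → Fin N → Fin N → Fin N → ℝ
  smooth : ∀ j k l, ContDiff ℝ (⊤ : ℕ∞) fun z => Γ z j k l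
  symm : ∀ z j k l, Γ z j k l = Γ z j l k
  compat : ∀ z i j k,
    pd k (fun w => S.ω w i j) z - (∑ l, Γ z l i k * S.ω z l j)
      - (∑ l, Γ z l j k * S.ω z i l) = 0

/-- The covariant Hessian matrix `(∇²H)_{jk} = ∂_j∂_k H − Σ_m Γ^m_{jk}∂_m H`. -/
noncomputable def covHessM {N : ℕ} {S : SymplForm N} (C : SymplConn N S)
    (h : Pt N → ℝ) (z : Pt N) : Matrix (Fin N) (Fin N) ℝ :=
  Matrix.of fun j k => pd j (fun w => pd k h w) z - ∑ m, C.Γ z m j k * pd m h z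

section Basic
variable {N : ℕ} {x : Pt N}

lemma clm_apply_eq_sum_pd (L : Pt N →L[ℝ] ℝ) (v : Pt N) :
    L v = ∑ k, v k * L (Pi.single k 1) := by
  have hv : v = ∑ k, v k • (Pi.single k 1 : Pt N) := by
    ext j
    simp [Pi.single_apply, Finset.sum_apply, mul_comm]
  conv_lhs => rw [hv]
  rw [map_sum]
  simp [smul_eq_mul]

lemma fderiv_eq_sum_pd (f : Pt N → ℝ) (x v : Pt N) :
    fderiv ℝ f x v = ∑ k, v k * pd k f x := by
  simpa [pd] using clm_apply_eq_sum_pd (fderiv ℝ f x) v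

lemma pd_congr {f g : Pt N → ℝ} (h : ∀ x, f x = g x) (i : Fin N) (x : Pt N) :
    pd i f x = pd i g x := by
  have : f = g := funext h
  rw [pd, pd, this]

lemma pd_const (i : Fin N) (c : ℝ) (x : Pt N) : pd i (fun _ => c) x = 0 := by
  simp [pd]

lemma contDiff_pd {f : Pt N → ℝ} (hf : ContDiff ℝ (⊤ : ℕ∞) f) (i : Fin N) :
    ContDiff ℝ (⊤ : ℕ∞) fun x => pd i f x := by
  have h1 : ContDiff ℝ (⊤ : ℕ∞) (fderiv ℝ f) := hf.fderiv_right (by simp)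
  exact h1.clm_apply contDiff_const

lemma pd_sum {ι : Type*} (s : Finset ι) (f : ι → Pt N → ℝ)
    (hf : ∀ p ∈ s, DifferentiableAt ℝ (f p) x) (i : Fin N) :
    pd i (fun z => ∑ p ∈ s, f p z) x = ∑ p ∈ s, pd i (f p) x := by
  rw [pd, fderiv_fun_sum hf]
  simp [pd]

lemma pd_mul {f g : Pt N → ℝ} (hf : DifferentiableAt ℝ f x) (hg : DifferentiableAt ℝ g x)
    (i : Fin N) :
    pd i (fun z => f z * g z) x = pd i f x * g x + f x * pd i g x := by
  rw [pd, fderiv_fun_mul hf hg]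
  simp [pd]
  ring

/-- Schwarz: symmetry of second partial derivatives for smooth functions. -/
lemma pd_comm {f : Pt N → ℝ} (hf : ContDiff ℝ (⊤ : ℕ∞) f) (i j : Fin N) (x : Pt N) :
    pd i (fun w => pd j f w) x = pd j (fun w => pd i f w) x := by
  have hdf : ContDiff ℝ (⊤ : ℕ∞) (fderiv ℝ f) := hf.fderiv_right (by simp)
  have hder : ∀ w, HasFDerivAt f (fderiv ℝ f w) w := fun w =>
    (hf.differentiable (by simp) w).hasFDerivAt
  have hx : HasFDerivAt (fderiv ℝ f) (fderiv ℝ (fderiv ℝ f) x) x :=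
    (hdf.differentiable (by simp) x).hasFDerivAt
  have hsym := second_derivative_symmetric hder hx
  have hrep : ∀ a b : Fin N, pd a (fun w => pd b f w) x
      = (fderiv ℝ (fderiv ℝ f) x (Pi.single a 1)) (Pi.single b 1) := by
    intro a b
    have hcl := fderiv_clm_apply (𝕜 := ℝ) (c := fderiv ℝ f)
      (u := fun _ => (Pi.single b 1 : Pt N)) (hdf.differentiable (by simp) x)
      (differentiableAt_const _)
    simp only [pd]
    rw [hcl]
    simp
  rw [hrep, hrep, hsym]

end Basic

section Smooth
variable {N : ℕ}

lemma contDiff_det {M : Pt N → Matrix (Fin N) (Fin N) ℝ}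
    (h : ∀ i j, ContDiff ℝ (⊤ : ℕ∞) fun z => M z i j) :
    ContDiff ℝ (⊤ : ℕ∞) fun z => (M z).det := by
  have : (fun z => (M z).det)
      = fun z => ∑ σ : Equiv.Perm (Fin N),
          ((Equiv.Perm.sign σ : ℤ) : ℝ) * ∏ i, M z (σ i) i := by
    funext z
    simp [Matrix.det_apply, Units.smul_def, zsmul_eq_mul]
  rw [this]
  apply ContDiff.sum
  intro σ _
  exact contDiff_const.mul (contDiff_prod fun i _ => h (σ i) i)

lemma contDiff_adjugate {M : Pt N → Matrix (Fin N) (Fin N) ℝ}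
    (h : ∀ i j, ContDiff ℝ (⊤ : ℕ∞) fun z => M z i j) (i j : Fin N) :
    ContDiff ℝ (⊤ : ℕ∞) fun z => (M z).adjugate i j := by
  have : (fun z => (M z).adjugate i j)
      = fun z => ((M z).updateRow j (Pi.single i 1)).det := by
    funext z; rw [Matrix.adjugate_apply]
  rw [this]
  apply contDiff_det
  intro a b
  by_cases haj : a = j
  · subst haj; simpa [Matrix.updateRow_apply] using contDiff_const
  · simpa [Matrix.updateRow_apply, haj] using h a b

lemma contDiff_inv_entry {M : Pt N → Matrix (Fin N) (Fin N) ℝ}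
    (h : ∀ i j, ContDiff ℝ (⊤ : ℕ∞) fun z => M z i j)
    (hinv : ∀ z, IsUnit (M z).det) (i j : Fin N) :
    ContDiff ℝ (⊤ : ℕ∞) fun z => (M z)⁻¹ i j := by
  have : (fun z => (M z)⁻¹ i j)
      = fun z => ((M z).det)⁻¹ * (M z).adjugate i j := by
    funext z
    rw [Matrix.inv_def, Matrix.smul_apply, Ring.inverse_eq_inv', smul_eq_mul]
  rw [this]
  have hd : ContDiff ℝ (⊤ : ℕ∞) fun z => (M z).det := contDiff_det h
  have hne : ∀ z, (M z).det ≠ 0 := fun z => (hinv z).ne_zero -- maybe IsUnit.ne_zero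
  exact (hd.inv hne).mul (contDiff_adjugate h i j)

end Smooth

/-- Christoffel matrix `(Gam C z l) a b = Γ^a_{b l}`. -/
noncomputable def Gam {N : ℕ} {S : SymplForm N} (C : SymplConn N S) (z : Pt N) (l : Fin N) :
    Matrix (Fin N) (Fin N) ℝ :=
  Matrix.of fun a b => C.Γ z a b l

section PsiFacts
open Matrix
variable {N : ℕ} (S : SymplForm N) (C : SymplConn N S)

lemma Psi_smooth (i j : Fin N) : ContDiff ℝ (⊤ : ℕ∞) fun z => Psi S.ω z i j :=
  contDiff_inv_entry S.smooth S.invertible i j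

lemma omega_mul_Psi (z : Pt N) : S.ω z * Psi S.ω z = 1 :=
  Matrix.mul_nonsing_inv _ (S.invertible z)

lemma Psi_mul_omega (z : Pt N) : Psi S.ω z * S.ω z = 1 :=
  Matrix.nonsing_inv_mul _ (S.invertible z)

lemma omega_transpose (z : Pt N) : (S.ω z)ᵀ = -(S.ω z) := by
  ext i j; simpa [Matrix.transpose_apply] using (S.antisymm z j i)

lemma Psi_transpose (z : Pt N) : (Psi S.ω z)ᵀ = -(Psi S.ω z) := by
  have h2 : (-(S.ω z))⁻¹ = -(S.ω z)⁻¹ := by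
    apply Matrix.inv_eq_right_inv
    rw [Matrix.neg_mul, Matrix.mul_neg, neg_neg, Matrix.mul_nonsing_inv _ (S.invertible z)]
  rw [Psi, Matrix.transpose_nonsing_inv, omega_transpose, h2]

lemma pd_omega_matrix (z : Pt N) (l : Fin N) :
    (Matrix.of fun i j => pd l (fun w => S.ω w i j) z)
      = (Gam C z l)ᵀ * S.ω z + S.ω z * Gam C z l := by
  ext i j
  have h := C.compat z i j l
  have h' : pd l (fun w => S.ω w i j) z
      = (∑ a, C.Γ z a i l * S.ω z a j) + ∑ a, C.Γ z a j l * S.ω z i a := by linarith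
  simp only [Matrix.of_apply, Matrix.add_apply, Matrix.mul_apply, Matrix.transpose_apply,
    Gam, Matrix.of_apply, h']
  congr 1
  exact Finset.sum_congr rfl fun a _ => mul_comm _ _

end PsiFacts

section PsiDeriv
open Matrix
variable {N : ℕ} (S : SymplForm N) (C : SymplConn N S)

lemma psi_mul_omega_assoc (z : Pt N) (X : Matrix (Fin N) (Fin N) ℝ) :
    Psi S.ω z * (S.ω z * X) = X := by
  rw [← Matrix.mul_assoc, Psi_mul_omega, Matrix.one_mul]

lemma omega_mul_psi_assoc (z : Pt N) (X : Matrix (Fin N) (Fin N) ℝ) :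
    S.ω z * (Psi S.ω z * X) = X := by
  rw [← Matrix.mul_assoc, omega_mul_Psi, Matrix.one_mul]

lemma pd_Psi_matrix (z : Pt N) (l : Fin N) :
    (Matrix.of fun i j => pd l (fun w => Psi S.ω w i j) z)
      = -(Psi S.ω z * (Gam C z l)ᵀ) - Gam C z l * Psi S.ω z := by
  set DP := (Matrix.of fun i j => pd l (fun w => Psi S.ω w i j) z) with hDP
  set DW := (Matrix.of fun i j => pd l (fun w => S.ω w i j) z) with hDW
  have dOm : ∀ (w : Pt N) i j, DifferentiableAt ℝ (fun w => S.ω w i j) w :=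
    fun w i j => ((S.smooth i j).differentiable (by simp)) w
  have dPsi : ∀ (w : Pt N) i j, DifferentiableAt ℝ (fun w => Psi S.ω w i j) w :=
    fun w i j => ((Psi_smooth S i j).differentiable (by simp)) w
  have hzero : DW * Psi S.ω z + S.ω z * DP = 0 := by
    ext i k
    have hconst : pd l (fun w => ∑ j, S.ω w i j * Psi S.ω w j k) z = 0 := by
      rw [pd_congr (fun w => by rw [← Matrix.mul_apply, omega_mul_Psi S w]) l z]
      exact pd_const l _ z
    rw [pd_sum Finset.univ _ (fun p _ => ((dOm z i p).fun_mul (dPsi z p k)))] at hconst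
    have hterm : ∀ p : Fin N, pd l (fun w => S.ω w i p * Psi S.ω w p k) z
        = pd l (fun w => S.ω w i p) z * Psi S.ω z p k
          + S.ω z i p * pd l (fun w => Psi S.ω w p k) z :=
      fun p => pd_mul (dOm z i p) (dPsi z p k) l
    rw [Finset.sum_congr rfl (fun p _ => hterm p), Finset.sum_add_distrib] at hconst
    simpa [Matrix.add_apply, Matrix.mul_apply, Matrix.zero_apply, hDP, hDW] using hconst
  have hω : S.ω z * DP = -(DW * Psi S.ω z) := by
    rw [eq_neg_iff_add_eq_zero, add_comm]; exact hzero
  have hDWval : DW = (Gam C z l)ᵀ * S.ω z + S.ω z * Gam C z l := pd_omega_matrix S C z l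
  calc DP = Psi S.ω z * (S.ω z * DP) := (psi_mul_omega_assoc S z DP).symm
    _ = Psi S.ω z * (-(DW * Psi S.ω z)) := by rw [hω]
    _ = -(Psi S.ω z * (DW * Psi S.ω z)) := by rw [Matrix.mul_neg]
    _ = -(Psi S.ω z * (Gam C z l)ᵀ) - Gam C z l * Psi S.ω z := by
        rw [hDWval, Matrix.add_mul, Matrix.mul_add, Matrix.mul_assoc ((Gam C z l)ᵀ),
          omega_mul_Psi, Matrix.mul_one, Matrix.mul_assoc (S.ω z), psi_mul_omega_assoc,
          neg_add, sub_eq_add_neg]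

end PsiDeriv

/-- The Hamiltonian vector field `F^i = Σ_m ∂_m H Ψ^{mi}`. -/
noncomputable def Fv {N : ℕ} (S : SymplForm N) (Hm : Pt N → ℝ) (z : Pt N) (i : Fin N) : ℝ :=
  ∑ m, pd m Hm z * Psi S.ω z m i

section Key
open Matrix
variable {N : ℕ} (S : SymplForm N) (C : SymplConn N S) (Hm : Pt N → ℝ) (hHm : ContDiff ℝ (⊤ : ℕ∞) Hm)

include hHm in
lemma Fv_smooth (i : Fin N) : ContDiff ℝ (⊤ : ℕ∞) fun z => Fv S Hm z i :=
  ContDiff.sum fun m _ => (contDiff_pd hHm m).mul (Psi_smooth S m i)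

lemma Psi_anti (z : Pt N) (a b : Fin N) : Psi S.ω z a b = -Psi S.ω z b a := by
  have h := congrFun (congrFun (Psi_transpose S z) a) b
  simp only [Matrix.transpose_apply, Matrix.neg_apply] at h
  linarith

include hHm in
lemma keyIdentity (z : Pt N) (i m : Fin N) :
    pd m (fun w => Fv S Hm w i) z
      = -(∑ j, Fv S Hm z j * C.Γ z i m j) - (Psi S.ω z * covHessM C Hm z) i m := by
  have dpd : ∀ (p : Fin N) (w : Pt N), DifferentiableAt ℝ (fun w => pd p Hm w) w :=
    fun p w => ((contDiff_pd hHm p).differentiable (by simp)) w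
  have dPsi : ∀ (p q : Fin N) (w : Pt N), DifferentiableAt ℝ (fun w => Psi S.ω w p q) w :=
    fun p q w => ((Psi_smooth S p q).differentiable (by simp)) w
  -- expand LHS
  have step1 : pd m (fun w => Fv S Hm w i) z
      = ∑ p, (pd m (fun w => pd p Hm w) z * Psi S.ω z p i
          + pd p Hm z * pd m (fun w => Psi S.ω w p i) z) := by
    have : pd m (fun w => Fv S Hm w i) z
        = pd m (fun w => ∑ p, pd p Hm w * Psi S.ω w p i) z := rfl
    rw [this, pd_sum Finset.univ _ (fun p _ => (dpd p z).fun_mul (dPsi p i z))]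
    exact Finset.sum_congr rfl fun p _ => pd_mul (dpd p z) (dPsi p i z) m
  have hPsiD : ∀ p : Fin N, pd m (fun w => Psi S.ω w p i) z
      = -(∑ a, Psi S.ω z p a * C.Γ z i a m) - ∑ a, C.Γ z p a m * Psi S.ω z a i := by
    intro p
    have h := congrFun (congrFun (pd_Psi_matrix S C z m) p) i
    simp only [Matrix.of_apply, Matrix.sub_apply, Matrix.neg_apply, Matrix.mul_apply,
      Matrix.transpose_apply, Gam, Matrix.of_apply] at h
    exact h
  rw [step1]
  -- canonical pieces
  have hA : ∑ p, pd m (fun w => pd p Hm w) z * Psi S.ω z p i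
      = ∑ p, pd p (fun w => pd m Hm w) z * Psi S.ω z p i :=
    Finset.sum_congr rfl fun p _ => by rw [pd_comm hHm m p z]
  have split : ∑ p, (pd m (fun w => pd p Hm w) z * Psi S.ω z p i
          + pd p Hm z * pd m (fun w => Psi S.ω w p i) z)
      = (∑ p, pd p (fun w => pd m Hm w) z * Psi S.ω z p i)
        + ((-∑ a, (∑ p, pd p Hm z * Psi S.ω z p a) * C.Γ z i m a)
          + (-∑ a, (∑ q, C.Γ z q a m * pd q Hm z) * Psi S.ω z a i)) := by
    rw [Finset.sum_add_distrib, hA]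
    congr 1
    have : ∀ p : Fin N, pd p Hm z * pd m (fun w => Psi S.ω w p i) z
        = (-∑ a, pd p Hm z * Psi S.ω z p a * C.Γ z i m a)
          + (-∑ a, C.Γ z p a m * pd p Hm z * Psi S.ω z a i) := by
      intro p
      rw [hPsiD p]
      rw [mul_sub, mul_neg, Finset.mul_sum, Finset.mul_sum]
      rw [sub_eq_add_neg]
      congr 1
      · rw [neg_inj]
        exact Finset.sum_congr rfl fun a _ => by rw [C.symm z i a m, mul_assoc, C.symm z i m a]
      · rw [neg_inj]
        exact Finset.sum_congr rfl fun a _ => by ring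
    rw [Finset.sum_congr rfl fun p _ => this p, Finset.sum_add_distrib]
    congr 1
    · rw [Finset.sum_neg_distrib, neg_inj, Finset.sum_comm]
      exact Finset.sum_congr rfl fun a _ => by rw [Finset.sum_mul]
    · rw [Finset.sum_neg_distrib, neg_inj, Finset.sum_comm]
      exact Finset.sum_congr rfl fun a _ => by rw [Finset.sum_mul]
  rw [split]
  -- now match with the RHS
  have hB : -(∑ j, Fv S Hm z j * C.Γ z i m j)
      = -∑ a, (∑ p, pd p Hm z * Psi S.ω z p a) * C.Γ z i m a := rfl
  have hPsiHess : -((Psi S.ω z * covHessM C Hm z) i m)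
      = (∑ p, pd p (fun w => pd m Hm w) z * Psi S.ω z p i)
        + (-∑ a, (∑ q, C.Γ z q a m * pd q Hm z) * Psi S.ω z a i) := by
    rw [Matrix.mul_apply]
    rw [← Finset.sum_neg_distrib]
    have : ∀ a : Fin N, -(Psi S.ω z i a * covHessM C Hm z a m)
        = pd a (fun w => pd m Hm w) z * Psi S.ω z a i
          + -((∑ q, C.Γ z q a m * pd q Hm z) * Psi S.ω z a i) := by
      intro a
      rw [Psi_anti S z i a]
      simp only [covHessM, Matrix.of_apply]
      ring
    rw [Finset.sum_congr rfl fun a _ => this a, Finset.sum_add_distrib,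
      Finset.sum_neg_distrib]
  rw [sub_eq_add_neg, hB, hPsiHess]
  ring

end Key

section Dyn
variable {N : ℕ}

lemma hasDerivAt_comp_curve {f : Pt N → ℝ} (hf : ContDiff ℝ (⊤ : ℕ∞) f) {c : ℝ → Pt N} {c' : Pt N}
    {t : ℝ} (hc : HasDerivAt c c' t) :
    HasDerivAt (fun τ => f (c τ)) (∑ k, c' k * pd k f (c t)) t := by
  have h1 := ((hf.differentiable (by simp) (c t)).hasFDerivAt).comp_hasDerivAt t hc
  simpa [fderiv_eq_sum_pd, Function.comp_def] using h1

lemma hasDerivAt_matmul_entry {A B A' B' : ℝ → Matrix (Fin N) (Fin N) ℝ} {t : ℝ}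
    (hA : ∀ i j, HasDerivAt (fun s => A s i j) (A' t i j) t)
    (hB : ∀ i j, HasDerivAt (fun s => B s i j) (B' t i j) t) (i k : Fin N) :
    HasDerivAt (fun s => (A s * B s) i k) ((A' t * B t + A t * B' t) i k) t := by
  simp only [Matrix.mul_apply, Matrix.add_apply]
  rw [← Finset.sum_add_distrib]
  exact HasDerivAt.fun_sum fun j _ => by
    simpa using (hA i j).fun_mul (hB j k)

lemma matrix_mul_norm_le (A Z : Fin N → Fin N → ℝ) :
    ‖(fun i k => ∑ j, A i j * Z j k : Fin N → Fin N → ℝ)‖ ≤ N * ‖A‖ * ‖Z‖ := by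
  have hnn : (0:ℝ) ≤ N * ‖A‖ * ‖Z‖ := by positivity
  rw [pi_norm_le_iff_of_nonneg hnn]
  intro i
  rw [pi_norm_le_iff_of_nonneg hnn]
  intro k
  show ‖∑ j, A i j * Z j k‖ ≤ _
  calc ‖∑ j, A i j * Z j k‖ ≤ ∑ j : Fin N, ‖A i j * Z j k‖ := norm_sum_le _ _
    _ ≤ ∑ j : Fin N, ‖A‖ * ‖Z‖ := by
        apply Finset.sum_le_sum
        intro j _
        rw [norm_mul]
        gcongr
        · exact (norm_le_pi_norm (A i) j).trans (norm_le_pi_norm A i)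
        · exact (norm_le_pi_norm (Z j) k).trans (norm_le_pi_norm Z j)
    _ = N * ‖A‖ * ‖Z‖ := by simp [Finset.sum_const, mul_assoc]

end Dyn

/-- `Qm z a b = Σ_j F^j Γ^a_{b j}`. -/
noncomputable def Qm {N : ℕ} {S : SymplForm N} (C : SymplConn N S) (Hm : Pt N → ℝ)
    (z : Pt N) : Matrix (Fin N) (Fin N) ℝ :=
  Matrix.of fun a b => ∑ j, Fv S Hm z j * C.Γ z a b j

/-- Jacobian matrix of the Hamiltonian vector field. -/
noncomputable def DFm {N : ℕ} (S : SymplForm N) (Hm : Pt N → ℝ) (z : Pt N) :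
    Matrix (Fin N) (Fin N) ℝ :=
  Matrix.of fun i m => pd m (fun w => Fv S Hm w i) z

section MainLemmas
open Matrix Set
variable {N : ℕ} (S : SymplForm N) (C : SymplConn N S) (Hm : Pt N → ℝ) (hHm : ContDiff ℝ (⊤ : ℕ∞) Hm)

include hHm in
lemma DFm_eq (z : Pt N) :
    DFm S Hm z = -(Qm C Hm z) - Psi S.ω z * covHessM C Hm z := by
  ext i m
  simpa [DFm, Qm] using keyIdentity S C Hm hHm z i m

lemma omega_deriv_along {c : ℝ → Pt N} {t : ℝ}
    (hc : HasDerivAt c (fun i => Fv S Hm (c t) i) t) (i j : Fin N) :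
    HasDerivAt (fun τ => S.ω (c τ) i j)
      (((Qm C Hm (c t))ᵀ * S.ω (c t) + S.ω (c t) * Qm C Hm (c t)) i j) t := by
  have h := hasDerivAt_comp_curve (S.smooth i j) hc
  convert h using 1
  have hent : ∀ k : Fin N, pd k (fun w => S.ω w i j) (c t)
      = ((Gam C (c t) k)ᵀ * S.ω (c t) + S.ω (c t) * Gam C (c t) k) i j := by
    intro k
    have := congrFun (congrFun (pd_omega_matrix S C (c t) k) i) j
    simpa using this
  rw [Finset.sum_congr rfl fun k _ => by rw [hent k]]
  simp only [Matrix.add_apply, Matrix.mul_apply, Matrix.transpose_apply, Gam, Qm,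
    Matrix.of_apply, Finset.mul_sum, Finset.sum_mul, mul_add, Finset.sum_add_distrib]
  congr 1
  · first
    | (rw [Finset.sum_comm]
       exact Finset.sum_congr rfl fun a _ => Finset.sum_congr rfl fun b _ => by ring)
    | exact Finset.sum_congr rfl fun a _ => Finset.sum_congr rfl fun b _ => by ring
  · first
    | (rw [Finset.sum_comm]
       exact Finset.sum_congr rfl fun a _ => Finset.sum_congr rfl fun b _ => by ring)
    | exact Finset.sum_congr rfl fun a _ => Finset.sum_congr rfl fun b _ => by ring

end MainLemmas

section Transport
open Matrix Set
variable {N : ℕ} (S : SymplForm N) (C : SymplConn N S) (Hm : Pt N → ℝ)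

lemma transport_preserves {T : ℝ} (hT : 0 ≤ T) {y : Pt N} {c : ℝ → Pt N}
    {V : ℝ → Matrix (Fin N) (Fin N) ℝ}
    (hc : ∀ t ∈ Icc (0:ℝ) T, HasDerivAt c (fun i => Fv S Hm (c t) i) t)
    (hc0 : c 0 = y) (hV0 : V 0 = 1)
    (hV : ∀ t ∈ Icc (0:ℝ) T, ∀ i k,
      HasDerivAt (fun τ => V τ i k) ((-(Qm C Hm (c t) * V t)) i k) t) :
    ∀ t ∈ Icc (0:ℝ) T, (V t)ᵀ * S.ω (c t) * V t = S.ω y := by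
  have hGd : ∀ t ∈ Icc (0:ℝ) T, ∀ a b,
      HasDerivAt (fun τ => ((V τ)ᵀ * S.ω (c τ) * V τ) a b) 0 t := by
    intro t ht a b
    set Q := Qm C Hm (c t) with hQ
    have hVT : ∀ i j, HasDerivAt (fun τ => (V τ)ᵀ i j) (((-(Q * V t))ᵀ) i j) t := by
      intro i j
      simpa [Matrix.transpose_apply] using hV t ht j i
    have h1 : ∀ i j, HasDerivAt (fun τ => ((V τ)ᵀ * S.ω (c τ)) i j)
        (((-(Q * V t))ᵀ * S.ω (c t) + (V t)ᵀ * (Qᵀ * S.ω (c t) + S.ω (c t) * Q)) i j) t := by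
      intro i j
      exact hasDerivAt_matmul_entry (A := fun τ => (V τ)ᵀ) (B := fun τ => S.ω (c τ))
        (A' := fun _ => (-(Q * V t))ᵀ) (B' := fun _ => Qᵀ * S.ω (c t) + S.ω (c t) * Q)
        hVT (fun i j => omega_deriv_along S C Hm (hc t ht) i j) i j
    have h2 := hasDerivAt_matmul_entry (A := fun τ => (V τ)ᵀ * S.ω (c τ)) (B := V)
      (A' := fun _ => (-(Q * V t))ᵀ * S.ω (c t) + (V t)ᵀ * (Qᵀ * S.ω (c t) + S.ω (c t) * Q))
      (B' := fun _ => -(Q * V t)) h1 (hV t ht) a b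
    have hzero : ((-(Q * V t))ᵀ * S.ω (c t) + (V t)ᵀ * (Qᵀ * S.ω (c t) + S.ω (c t) * Q)) * V t
        + ((V t)ᵀ * S.ω (c t)) * (-(Q * V t)) = 0 := by
      simp only [Matrix.transpose_neg, Matrix.transpose_mul]
      noncomm_ring
    rw [hzero] at h2
    simpa using h2
  intro t ht
  have hcont : ∀ a b, ContinuousOn (fun τ => ((V τ)ᵀ * S.ω (c τ) * V τ) a b) (Icc 0 T) :=
    fun a b s hs => ((hGd s hs a b).continuousAt).continuousWithinAt
  have hconst : ∀ a b, ((V t)ᵀ * S.ω (c t) * V t) a b = ((V 0)ᵀ * S.ω (c 0) * V 0) a b := by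
    intro a b
    exact constant_of_has_deriv_right_zero (hcont a b)
      (fun s hs => (hGd s (Set.Ico_subset_Icc_self hs) a b).hasDerivWithinAt) t ht
  ext a b
  rw [hconst a b, hV0, hc0]
  simp

end Transport

section Invert
open Matrix Set
variable {N : ℕ} (S : SymplForm N)

lemma V_unit {z y : Pt N} {Vt : Matrix (Fin N) (Fin N) ℝ}
    (h : Vtᵀ * S.ω z * Vt = S.ω y) : IsUnit Vt.det := by
  have hdet := congrArg Matrix.det h
  rw [Matrix.det_mul, Matrix.det_mul, Matrix.det_transpose] at hdet
  rw [isUnit_iff_ne_zero]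
  intro h0
  rw [h0] at hdet
  simp at hdet
  exact (S.invertible y).ne_zero hdet.symm

lemma V_psi_conj {z y : Pt N} {Vt : Matrix (Fin N) (Fin N) ℝ}
    (h : Vtᵀ * S.ω z * Vt = S.ω y) :
    Vt * Psi S.ω y * Vtᵀ = Psi S.ω z := by
  have hV : IsUnit Vt.det := V_unit S h
  have hVT : IsUnit Vtᵀ.det := by rwa [Matrix.det_transpose]
  have h1 : Psi S.ω y = Vt⁻¹ * ((S.ω z)⁻¹ * (Vtᵀ)⁻¹) := by
    rw [Psi, ← h, Matrix.mul_inv_rev, Matrix.mul_inv_rev]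
  rw [h1, Psi]
  calc Vt * (Vt⁻¹ * ((S.ω z)⁻¹ * Vtᵀ⁻¹)) * Vtᵀ
      = (Vt * Vt⁻¹) * ((S.ω z)⁻¹ * (Vtᵀ⁻¹ * Vtᵀ)) := by
        rw [← Matrix.mul_assoc, ← Matrix.mul_assoc, Matrix.mul_assoc (Vt * Vt⁻¹),
          Matrix.mul_assoc (Vt * Vt⁻¹), Matrix.mul_assoc ((S.ω z)⁻¹)]
    _ = (S.ω z)⁻¹ := by
        rw [Matrix.mul_nonsing_inv _ hV, Matrix.nonsing_inv_mul _ hVT, Matrix.one_mul,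
          Matrix.mul_one]

end Invert

section Unique
open Matrix Set

lemma linear_ODE_unique {N : ℕ} {T : ℝ} (hT : 0 ≤ T)
    {A : ℝ → Matrix (Fin N) (Fin N) ℝ}
    (hAcont : ∀ i j, Continuous fun t => A t i j)
    {U V : ℝ → Matrix (Fin N) (Fin N) ℝ}
    (hU : ∀ t ∈ Icc (0:ℝ) T, ∀ i k, HasDerivAt (fun τ => U τ i k) ((A t * U t) i k) t)
    (hV : ∀ t ∈ Icc (0:ℝ) T, ∀ i k, HasDerivAt (fun τ => V τ i k) ((A t * V t) i k) t)
    (h0 : U 0 = V 0) : ∀ t ∈ Icc (0:ℝ) T, U t = V t := by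
  classical
  -- clamp
  set π : ℝ → ℝ := fun t => max 0 (min t T) with hπ
  have hπmem : ∀ t, π t ∈ Icc (0:ℝ) T := fun t => ⟨le_max_left _ _,
    max_le hT (min_le_right _ _)⟩
  have hπid : ∀ t ∈ Icc (0:ℝ) T, π t = t := fun t ht => by
    simp [hπ, min_eq_left ht.2, max_eq_right ht.1]
  have hAc : Continuous fun t => (fun i j => A t i j : Fin N → Fin N → ℝ) :=
    continuous_pi fun i => continuous_pi fun j => hAcont i j
  obtain ⟨Cb, hCb⟩ := (isCompact_Icc (a := (0:ℝ)) (b := T)).exists_bound_of_continuousOn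
    hAc.continuousOn
  set K : NNReal := Real.toNNReal (N * max Cb 0) with hK
  have hKcoe : (K : ℝ) = N * max Cb 0 := Real.coe_toNNReal _ (by positivity)
  set v : ℝ → (Fin N → Fin N → ℝ) → (Fin N → Fin N → ℝ) :=
    fun t Z => fun i k => ∑ j, A (π t) i j * Z j k with hv
  have hlip : ∀ t, LipschitzWith K (v t) := by
    intro t
    apply LipschitzWith.of_dist_le_mul
    intro Z1 Z2
    rw [dist_eq_norm, dist_eq_norm]
    have hsub : v t Z1 - v t Z2
        = fun i k => ∑ j, (fun i j => A (π t) i j) i j * (Z1 - Z2) j k := by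
      funext i k
      simp [hv, ← Finset.sum_sub_distrib, mul_sub]
    rw [hsub]
    calc ‖(fun i k => ∑ j, (fun i j => A (π t) i j) i j * (Z1 - Z2) j k :
            Fin N → Fin N → ℝ)‖
        ≤ N * ‖(fun i j => A (π t) i j : Fin N → Fin N → ℝ)‖ * ‖Z1 - Z2‖ :=
          matrix_mul_norm_le _ _
      _ ≤ N * max Cb 0 * ‖Z1 - Z2‖ := by
          gcongr
          exact (hCb _ (hπmem t)).trans (le_max_left _ _)
      _ = K * ‖Z1 - Z2‖ := by rw [hKcoe]
  have hfd : ∀ (F : ℝ → Matrix (Fin N) (Fin N) ℝ),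
      (∀ t ∈ Icc (0:ℝ) T, ∀ i k, HasDerivAt (fun τ => F τ i k) ((A t * F t) i k) t) →
      ∀ t ∈ Icc (0:ℝ) T,
        HasDerivAt (fun τ => (fun i k => F τ i k : Fin N → Fin N → ℝ))
          (fun i k => (A t * F t) i k) t := by
    intro F hF t ht
    exact hasDerivAt_pi.mpr fun i => hasDerivAt_pi.mpr fun k => hF t ht i k
  have hUc : ContinuousOn (fun τ => (fun i k => U τ i k : Fin N → Fin N → ℝ)) (Icc 0 T) :=
    fun s hs => ((hfd U hU s hs).continuousAt).continuousWithinAt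
  have hVc : ContinuousOn (fun τ => (fun i k => V τ i k : Fin N → Fin N → ℝ)) (Icc 0 T) :=
    fun s hs => ((hfd V hV s hs).continuousAt).continuousWithinAt
  have hval : ∀ (F : ℝ → Matrix (Fin N) (Fin N) ℝ) t, t ∈ Icc (0:ℝ) T →
      (fun i k => (A t * F t) i k) = v t (fun i k => F t i k) := by
    intro F t ht
    funext i k
    simp [hv, Matrix.mul_apply, hπid t ht]
  have key := ODE_solution_unique_of_mem_Icc_right (v := v)
    (s := fun _ => (Set.univ : Set (Fin N → Fin N → ℝ))) (K := K)
    (fun t _ => (hlip t).lipschitzOnWith)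
    (f := fun τ => (fun i k => U τ i k : Fin N → Fin N → ℝ))
    (g := fun τ => (fun i k => V τ i k : Fin N → Fin N → ℝ))
    (a := 0) (b := T) hUc
    (fun t ht => by
      have := (hfd U hU t (Set.Ico_subset_Icc_self ht)).hasDerivWithinAt
        (s := Set.Ici t)
      rwa [hval U t (Set.Ico_subset_Icc_self ht)] at this)
    (fun t _ => Set.mem_univ _) hVc
    (fun t ht => by
      have := (hfd V hV t (Set.Ico_subset_Icc_self ht)).hasDerivWithinAt
        (s := Set.Ici t)
      rwa [hval V t (Set.Ico_subset_Icc_self ht)] at this)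
    (fun t _ => Set.mem_univ _)
    (funext fun i => funext fun k => congrFun (congrFun h0 i) k)
  intro t ht
  have := key ht
  exact funext fun i => funext fun k => congrFun (congrFun this i) k

end Unique

section FlowJac
open Matrix Set ContinuousLinearMap

lemma flow_jacobian_ode {N : ℕ} (S : SymplForm N) (Hm : Pt N → ℝ) (hHm : ContDiff ℝ (⊤ : ℕ∞) Hm)
    {T : ℝ} {y : Pt N} {X : ℝ → Pt N → Pt N}
    (hXsmooth : ∀ i, ContDiff ℝ (⊤ : ℕ∞) fun q : ℝ × Pt N => X q.1 q.2 i)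
    (hXode : ∀ t ∈ Icc (0:ℝ) T, ∀ x i,
      HasDerivAt (fun τ => X τ x i) (Fv S Hm (X t x) i) t)
    {t : ℝ} (ht : t ∈ Icc (0:ℝ) T) (i k : Fin N) :
    HasDerivAt (fun τ => pd k (fun x => X τ x i) y)
      ((DFm S Hm (X t y) * Matrix.of fun a b => pd b (fun x => X t x a) y) i k) t := by
  have hgi := hXsmooth i
  set gi : ℝ × Pt N → ℝ := fun q => X q.1 q.2 i with hgidef
  have hgdiff : Differentiable ℝ gi := hgi.differentiable (by simp)
  have hgd : ∀ q, HasFDerivAt gi (fderiv ℝ gi q) q := fun q => (hgdiff q).hasFDerivAt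
  have hgd2 : HasFDerivAt (fderiv ℝ gi) (fderiv ℝ (fderiv ℝ gi) (t, y)) (t, y) :=
    (((hgi.fderiv_right (m := (⊤ : ℕ∞)) (by simp)).differentiable (by simp)) (t, y)).hasFDerivAt
  set f2 := fderiv ℝ (fderiv ℝ gi) (t, y) with hf2
  have hsym := second_derivative_symmetric hgd hgd2
  -- (a) representation of the Jacobian entries
  have hrep : ∀ (τ : ℝ) (a : Fin N), pd a (fun x => X τ x i) y
      = fderiv ℝ gi (τ, y) ((0:ℝ), Pi.single a 1) := by
    intro τ a
    have hcomp : HasFDerivAt (fun x : Pt N => X τ x i)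
        ((fderiv ℝ gi (τ, y)).comp (ContinuousLinearMap.inr ℝ ℝ (Pt N))) y :=
      (hgd (τ, y)).comp y (hasFDerivAt_prodMk_right τ y)
    simp only [pd]
    rw [hcomp.fderiv]
    simp
  -- (b) time derivative of the represented entries
  have hb : HasDerivAt (fun τ => fderiv ℝ gi (τ, y) ((0:ℝ), Pi.single k 1))
      ((f2 ((1:ℝ), (0:Pt N))) ((0:ℝ), Pi.single k 1)) t := by
    have hcurve : HasDerivAt (fun τ : ℝ => (τ, y)) ((1:ℝ), (0 : Pt N)) t :=
      (hasDerivAt_id t).prodMk (hasDerivAt_const t y)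
    have h1 : HasDerivAt (fun τ : ℝ => fderiv ℝ gi (τ, y)) (f2 ((1:ℝ), (0:Pt N))) t :=
      hgd2.comp_hasDerivAt t hcurve
    have h2 := ((ContinuousLinearMap.apply ℝ ℝ ((0:ℝ), (Pi.single k 1 : Pt N))).hasFDerivAt
      (x := fderiv ℝ gi (t, y))).comp_hasDerivAt t h1
    simpa [Function.comp_def] using h2
  -- (c,d,e,f) identification of the derivative value
  have hXl : ∀ l : Fin N, HasFDerivAt (fun x : Pt N => X t x l)
      ((fderiv ℝ (fun q : ℝ × Pt N => X q.1 q.2 l) (t, y)).comp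
        (ContinuousLinearMap.inr ℝ ℝ (Pt N))) y := fun l =>
    (((hXsmooth l).differentiable (by simp) (t, y)).hasFDerivAt).comp y
      (hasFDerivAt_prodMk_right t y)
  have hval : (f2 ((0:ℝ), Pi.single k 1)) ((1:ℝ), (0:Pt N))
      = ∑ l, pd l (fun w => Fv S Hm w i) (X t y) * pd k (fun x => X t x l) y := by
    have h1 : HasFDerivAt (fun x : Pt N => fderiv ℝ gi (t, x))
        (f2.comp (ContinuousLinearMap.inr ℝ ℝ (Pt N))) y :=
      hgd2.comp y (hasFDerivAt_prodMk_right t y)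
    have h2 : HasFDerivAt (fun x : Pt N => fderiv ℝ gi (t, x) ((1:ℝ), (0:Pt N)))
        ((ContinuousLinearMap.apply ℝ ℝ ((1:ℝ), (0:Pt N))).comp
          (f2.comp (ContinuousLinearMap.inr ℝ ℝ (Pt N)))) y :=
      ((ContinuousLinearMap.apply ℝ ℝ ((1:ℝ), (0:Pt N))).hasFDerivAt).comp y h1
    have heq : (fun x : Pt N => fderiv ℝ gi (t, x) ((1:ℝ), (0:Pt N)))
        = fun x => Fv S Hm (X t x) i := by
      funext x
      have hτ : HasDerivAt (fun τ => gi (τ, x)) (fderiv ℝ gi (t, x) ((1:ℝ), (0:Pt N))) t :=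
        by
          have hcx : HasDerivAt (fun τ : ℝ => (τ, x)) ((1:ℝ), (0 : Pt N)) t :=
            (hasDerivAt_id t).prodMk (hasDerivAt_const t x)
          exact (hgd (t, x)).comp_hasDerivAt t hcx
      exact hτ.unique (hXode t ht x i)
    have hXmap : HasFDerivAt (fun x : Pt N => X t x)
        (ContinuousLinearMap.pi fun l => fderiv ℝ (fun x => X t x l) y) y :=
      hasFDerivAt_pi.2 fun l => ((hXl l).differentiableAt).hasFDerivAt
    have hFvd : HasFDerivAt (fun w => Fv S Hm w i)
        (fderiv ℝ (fun w => Fv S Hm w i) (X t y)) (X t y) :=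
      (((Fv_smooth S Hm hHm i).differentiable (by simp)) _).hasFDerivAt
    have hchain : HasFDerivAt (fun x : Pt N => Fv S Hm (X t x) i)
        ((fderiv ℝ (fun w => Fv S Hm w i) (X t y)).comp
          (ContinuousLinearMap.pi fun l => fderiv ℝ (fun x => X t x l) y)) y :=
      hFvd.comp y hXmap
    have e1 : (f2 ((0:ℝ), Pi.single k 1)) ((1:ℝ), (0:Pt N))
        = fderiv ℝ (fun x : Pt N => fderiv ℝ gi (t, x) ((1:ℝ), (0:Pt N))) y
            (Pi.single k 1) := by
      rw [h2.fderiv]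
      simp
    rw [e1, heq, hchain.fderiv]
    simp only [ContinuousLinearMap.comp_apply, ContinuousLinearMap.pi_apply]
    rw [fderiv_eq_sum_pd]
    exact Finset.sum_congr rfl fun l _ => mul_comm _ _
  -- assemble
  have hfun : (fun τ => pd k (fun x => X τ x i) y)
      = fun τ => fderiv ℝ gi (τ, y) ((0:ℝ), Pi.single k 1) := funext fun τ => hrep τ k
  have hgoalval : ((DFm S Hm (X t y) * Matrix.of fun a b => pd b (fun x => X t x a) y) i k)
      = (f2 ((1:ℝ), (0:Pt N))) ((0:ℝ), Pi.single k 1) := by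
    rw [hsym ((1:ℝ), (0:Pt N)) ((0:ℝ), Pi.single k 1), hval]
    simp only [DFm, Matrix.mul_apply, Matrix.of_apply]
  rw [hfun, hgoalval]
  exact hb

end FlowJac

open Matrix Set

/-- Theorem 6.1(iii), formulas (6.8)–(6.10): the linearized Hamiltonian flow at `y`
factorizes into the `Γ`-parallel transport `V(t)` along the trajectory and the dynamical
factor `W(t)` solving `dW/dt = M(t)W`, `W(0)=I`,
with `M(t) = −Ψ(y)·V(t)ᵀ·∇²H(X^t(y))·V(t)`. -/
theorem linearized_flow_factorization (n : ℕ) (S : SymplForm (2*n))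
    (C : SymplConn (2*n) S)
    (Hm : Pt (2*n) → ℝ) (hHm : ContDiff ℝ (⊤ : ℕ∞) Hm)
    (T : ℝ) (hT : 0 ≤ T) (y : Pt (2*n))
    -- the Hamiltonian flow `X^t` of `H`, jointly smooth
    (X : ℝ → Pt (2*n) → Pt (2*n))
    (hXsmooth : ∀ i, ContDiff ℝ (⊤ : ℕ∞) fun q : ℝ × Pt (2*n) => X q.1 q.2 i)
    (hX0 : ∀ x, X 0 x = x)
    (hXode : ∀ t ∈ Set.Icc (0:ℝ) T, ∀ x i,
      HasDerivAt (fun τ => X τ x i)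
        (∑ m, pd m Hm (X t x) * Psi S.ω (X t x) m i) t)
    -- the `Γ`-parallel transport `V(t)` along the trajectory `t ↦ X^t(y)`
    (V : ℝ → Matrix (Fin (2*n)) (Fin (2*n)) ℝ)
    (hV0 : V 0 = 1)
    (hVode : ∀ t ∈ Set.Icc (0:ℝ) T, ∀ i k,
      HasDerivAt (fun τ => V τ i k)
        (-∑ j, ∑ m, deriv (fun τ => X τ y j) t * C.Γ (X t y) i m j * V t m k) t)
    -- the dynamical factor `W(t)`: `dW/dt = M(t)·W`, `W(0) = I`, with
    -- `M(t) = −Ψ(y)·V(t)ᵀ·∇²H(X^t(y))·V(t)`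
    (W : ℝ → Matrix (Fin (2*n)) (Fin (2*n)) ℝ)
    (hW0 : W 0 = 1)
    (hWode : ∀ t ∈ Set.Icc (0:ℝ) T, ∀ i k,
      HasDerivAt (fun τ => W τ i k)
        (((-(Psi S.ω y * Matrix.transpose (V t) * covHessM C Hm (X t y) * V t))
          * W t) i k) t) :
    ∀ t ∈ Set.Icc (0:ℝ) T,
      (Matrix.of fun i k => pd k (fun x => X t x i) y) = V t * W t := by
  have hXode' : ∀ t ∈ Set.Icc (0:ℝ) T, ∀ x i,
      HasDerivAt (fun τ => X τ x i) (Fv S Hm (X t x) i) t := fun t ht x i => hXode t ht x i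
  have hc : ∀ t ∈ Set.Icc (0:ℝ) T,
      HasDerivAt (fun τ => X τ y) (fun i => Fv S Hm (X t y) i) t := fun t ht =>
    hasDerivAt_pi.mpr fun i => hXode' t ht y i
  have hVQ : ∀ t ∈ Set.Icc (0:ℝ) T, ∀ i k,
      HasDerivAt (fun τ => V τ i k) ((-(Qm C Hm (X t y) * V t)) i k) t := by
    intro t ht i k
    have hderiv : ∀ j, deriv (fun τ => X τ y j) t = Fv S Hm (X t y) j := fun j =>
      (hXode' t ht y j).deriv
    convert hVode t ht i k using 1
    simp only [Matrix.neg_apply, Matrix.mul_apply, Qm, Matrix.of_apply, Finset.sum_mul]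
    rw [neg_inj, Finset.sum_comm]
    exact Finset.sum_congr rfl fun j _ => Finset.sum_congr rfl fun m _ => by
      rw [hderiv j]
  have hGconst := transport_preserves S C Hm hT hc (hX0 y) hV0 hVQ
  have hVPsi : ∀ t ∈ Set.Icc (0:ℝ) T,
      V t * Psi S.ω y * (V t)ᵀ = Psi S.ω (X t y) := fun t ht =>
    V_psi_conj S (hGconst t ht)
  have hU : ∀ t ∈ Set.Icc (0:ℝ) T, ∀ i k,
      HasDerivAt (fun τ => (Matrix.of fun a b => pd b (fun x => X τ x a) y) i k)
        ((DFm S Hm (X t y) * (Matrix.of fun a b => pd b (fun x => X t x a) y)) i k) t :=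
    fun t ht i k => flow_jacobian_ode S Hm hHm hXsmooth hXode' ht i k
  have hU0 : (Matrix.of fun a b => pd b (fun x => X 0 x a) y)
      = (1 : Matrix (Fin (2*n)) (Fin (2*n)) ℝ) := by
    ext a b
    simp only [Matrix.of_apply]
    rw [pd_congr (fun x => by rw [hX0 x]) b y]
    have hproj : pd b (fun x : Pt (2*n) => x a) y = (Pi.single b 1 : Pt (2*n)) a := by
      simp only [pd]
      rw [show (fun x : Pt (2*n) => x a)
          = ⇑(ContinuousLinearMap.proj (R := ℝ) (φ := fun _ : Fin (2*n) => ℝ) a) from rfl,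
        ContinuousLinearMap.fderiv]
      rfl
    rw [hproj]
    simp [Pi.single_apply, Matrix.one_apply, eq_comm]
  have hVW : ∀ t ∈ Set.Icc (0:ℝ) T, ∀ i k,
      HasDerivAt (fun τ => (V τ * W τ) i k)
        ((DFm S Hm (X t y) * (V t * W t)) i k) t := by
    intro t ht i k
    have h := hasDerivAt_matmul_entry (A := V) (B := W)
      (A' := fun _ => -(Qm C Hm (X t y) * V t))
      (B' := fun _ => (-(Psi S.ω y * (V t)ᵀ * covHessM C Hm (X t y) * V t)) * W t)
      (hVQ t ht) (fun i k => hWode t ht i k) i k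
    have hM : V t * (-(Psi S.ω y * (V t)ᵀ * covHessM C Hm (X t y) * V t))
        = -(Psi S.ω (X t y) * covHessM C Hm (X t y) * V t) := by
      rw [Matrix.mul_neg, neg_inj]
      have hassoc : V t * (Psi S.ω y * (V t)ᵀ * covHessM C Hm (X t y) * V t)
          = (V t * Psi S.ω y * (V t)ᵀ) * (covHessM C Hm (X t y) * V t) := by
        noncomm_ring
      rw [hassoc, hVPsi t ht, ← Matrix.mul_assoc]
    have hval : -(Qm C Hm (X t y) * V t) * W t
        + V t * ((-(Psi S.ω y * (V t)ᵀ * covHessM C Hm (X t y) * V t)) * W t)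
        = DFm S Hm (X t y) * (V t * W t) := by
      rw [← Matrix.mul_assoc (V t), hM, DFm_eq S C Hm hHm (X t y)]
      noncomm_ring
    rw [← hval]
    exact h
  have hAcont : ∀ i j, Continuous fun t => DFm S Hm (X t y) i j := by
    intro i j
    have h1 : Continuous fun z => pd j (fun w => Fv S Hm w i) z :=
      (contDiff_pd (Fv_smooth S Hm hHm i) j).continuous
    have h2 : Continuous fun t : ℝ => X t y := continuous_pi fun l =>
      ((hXsmooth l).continuous).comp (continuous_id.prodMk continuous_const)
    exact h1.comp h2
  have huniq := linear_ODE_unique hT hAcont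
    (U := fun t => Matrix.of fun a b => pd b (fun x => X t x a) y)
    (V := fun t => V t * W t) hU hVW
    (by show (Matrix.of fun a b => pd b (fun x => X 0 x a) y) = V 0 * W 0
        rw [hU0, hV0, hW0, Matrix.one_mul])
  exact huniq
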